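/- Let A and B be subsets of a proper metric space (X,d) with basepoint x₀, and suppose there is a constant c > 0 such that d(A \ B_r, B \ B_r) ≥ cr for all r ≥ 0. Then the function φ(x) = d(x,A)/(d(x,A) + d(x,B)) satisfies: there exists c_φ > 0 such that |φ(x) - φ(y)|·‖x‖ ≤ c_φ·d(x,y) for all x, y ∈ X. -/

import Mathlib

open Metric

theorem phi_mem_U
    {X : Type*} [MetricSpace X] [ProperSpace X] (x0 : X) (A B : Set X)
    (hA : A.Nonempty) (hB : B.Nonempty) (c : ℝ) (hc : 0 < c)
    (hsep : ∀ r : ℝ, 0 ≤ r → ∀ a ∈ A, r ≤ dist a x0 → ∀ b ∈ B, r ≤ dist b x0 →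
      c * r ≤ dist a b) :
    ∃ cphi > (0 : ℝ), ∀ x y : X,
      |infDist x A / (infDist x A + infDist x B) -
        infDist y A / (infDist y A + infDist y B)| * dist x x0 ≤ cphi * dist x y := by
  have hc1 : (0:ℝ) < 1 + c := by linarith
  set C : ℝ := c / (1 + c) with hC
  have hCpos : 0 < C := div_pos hc hc1
  have hClt1 : C < 1 := (div_lt_one hc1).2 (by linarith)
  -- key lemma: infDist x A + infDist x B ≥ C * dist x x0
  have key : ∀ x : X, C * dist x x0 ≤ infDist x A + infDist x B := by
    intro x
    by_contra h
    push_neg at h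
    set r := dist x x0 with hr
    have hr0 : 0 ≤ r := dist_nonneg
    have hA0 : 0 ≤ infDist x A := infDist_nonneg
    have hB0 : 0 ≤ infDist x B := infDist_nonneg
    set ε := (C * r - (infDist x A + infDist x B)) / 2 with hε
    have hεpos : 0 < ε := by simp only [hε]; linarith
    obtain ⟨a, haA, hax⟩ := (infDist_lt_iff hA).1
      (show infDist x A < infDist x A + ε by linarith)
    obtain ⟨b, hbB, hbx⟩ := (infDist_lt_iff hB).1
      (show infDist x B < infDist x B + ε by linarith)
    have haxC : dist x a < C * r := by simp only [hε] at hax; linarith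
    have hbxC : dist x b < C * r := by simp only [hε] at hbx; linarith
    have ha0 : (1 - C) * r ≤ dist a x0 := by
      have h1 : r ≤ dist x a + dist a x0 := dist_triangle x a x0
      nlinarith
    have hb0 : (1 - C) * r ≤ dist b x0 := by
      have h1 : r ≤ dist x b + dist b x0 := dist_triangle x b x0
      nlinarith
    have hsepab := hsep ((1 - C) * r) (mul_nonneg (by linarith) hr0) a haA ha0 b hbB hb0
    have hcC : c * ((1 - C) * r) = C * r := by
      simp only [hC]; field_simp; ring
    have hab : dist a b ≤ dist a x + dist x b := dist_triangle a x b
    have hax' : dist a x = dist x a := dist_comm a x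
    simp only [hε] at hax hbx
    linarith
  refine ⟨(1 + c) / c, div_pos hc1 hc, ?_⟩
  intro x y
  have hone : (1:ℝ) ≤ (1 + c) / c := (one_le_div hc).2 (by linarith)
  set ax := infDist x A with hax
  set bx := infDist x B with hbx
  set ay := infDist y A with hay
  set by' := infDist y B with hby
  have hax0 : 0 ≤ ax := infDist_nonneg
  have hbx0 : 0 ≤ bx := infDist_nonneg
  have hay0 : 0 ≤ ay := infDist_nonneg
  have hby0 : 0 ≤ by' := infDist_nonneg
  rcases eq_or_lt_of_le (add_nonneg hax0 hbx0) with hsx | hsx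
  · -- sum at x is zero, hence dist x x0 = 0
    have hdx : dist x x0 = 0 := by nlinarith [key x, dist_nonneg (x := x) (y := x0)]
    rw [hdx, mul_zero]
    positivity
  rcases eq_or_lt_of_le (add_nonneg hay0 hby0) with hsy | hsy
  · -- sum at y is zero, hence y = x0
    have hdy : dist y x0 = 0 := by nlinarith [key y, dist_nonneg (x := y) (y := x0)]
    have hyx0 : y = x0 := by rwa [dist_eq_zero] at hdy
    rw [← hsy, div_zero, sub_zero]
    have hφ : |ax / (ax + bx)| ≤ 1 := by
      rw [abs_of_nonneg (div_nonneg hax0 (le_of_lt hsx))]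
      exact div_le_one_of_le₀ (by linarith) (le_of_lt hsx)
    calc |ax / (ax + bx)| * dist x x0 ≤ 1 * dist x x0 :=
          mul_le_mul_of_nonneg_right hφ dist_nonneg
      _ = dist x y := by rw [hyx0, one_mul]
      _ ≤ (1 + c) / c * dist x y :=
          le_mul_of_one_le_left dist_nonneg hone
  · -- main case
    have h1 : |ax - ay| ≤ dist x y := by
      rw [abs_sub_le_iff]
      constructor
      · linarith [infDist_le_infDist_add_dist (x := x) (y := y) (s := A)]
      · linarith [infDist_le_infDist_add_dist (x := y) (y := x) (s := A),
          dist_comm x y]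
    have h2 : |by' - bx| ≤ dist x y := by
      rw [abs_sub_le_iff]
      constructor
      · linarith [infDist_le_infDist_add_dist (x := y) (y := x) (s := B),
          dist_comm x y]
      · linarith [infDist_le_infDist_add_dist (x := x) (y := y) (s := B)]
    have hnum : |ax * (ay + by') - ay * (ax + bx)| ≤ (ay + by') * dist x y := by
      have e : ax * (ay + by') - ay * (ax + bx) = by' * (ax - ay) + ay * (by' - bx) := by
        ring
      rw [e]
      calc |by' * (ax - ay) + ay * (by' - bx)|
          ≤ |by' * (ax - ay)| + |ay * (by' - bx)| := abs_add_le _ _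
        _ = by' * |ax - ay| + ay * |by' - bx| := by
            rw [abs_mul, abs_mul, abs_of_nonneg hby0, abs_of_nonneg hay0]
        _ ≤ by' * dist x y + ay * dist x y :=
            add_le_add (mul_le_mul_of_nonneg_left h1 hby0)
              (mul_le_mul_of_nonneg_left h2 hay0)
        _ = (ay + by') * dist x y := by ring
    have hφ : |ax / (ax + bx) - ay / (ay + by')| ≤ dist x y / (ax + bx) := by
      rw [div_sub_div _ _ (ne_of_gt hsx) (ne_of_gt hsy), abs_div,
        abs_of_pos (mul_pos hsx hsy), div_le_div_iff₀ (mul_pos hsx hsy) hsx]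
      have e2 : ax * (ay + by') - (ax + bx) * ay = ax * (ay + by') - ay * (ax + bx) := by
        ring
      rw [e2]
      nlinarith [mul_le_mul_of_nonneg_right hnum hsx.le]
    have hxle : dist x x0 ≤ (ax + bx) * ((1 + c) / c) := by
      have hk := key x
      rw [hC, ← hax, ← hbx] at hk
      rw [div_mul_eq_mul_div, div_le_iff₀ hc1] at hk
      rw [show (ax + bx) * ((1 + c) / c) = ((ax + bx) * (1 + c)) / c by ring,
        le_div_iff₀ hc]
      linarith
    calc |ax / (ax + bx) - ay / (ay + by')| * dist x x0
        ≤ (dist x y / (ax + bx)) * ((ax + bx) * ((1 + c) / c)) :=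
          mul_le_mul hφ hxle dist_nonneg (div_nonneg dist_nonneg (le_of_lt hsx))
      _ = (1 + c) / c * dist x y := by field_simp
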